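/- For all A, B, C in A(q), the triple product satisfies commutativity: A · adj(B) · C = C · adj(B) · A. -/
import Mathlib


/-- The matrix `[x,y]_q`. -/
def Mq (a b c h k x y : ℚ) : Matrix (Fin 2) (Fin 2) ℚ :=
  !![x - h, -c * (y - k); y - k, a * (x - h) + b * (y - k)]

/-- The set `A(q)` of matrices `[x,y]_q`. -/
def Aq (a b c h k : ℚ) : Set (Matrix (Fin 2) (Fin 2) ℚ) :=
  {M | ∃ x y : ℚ, M = Mq a b c h k x y}

/-- The triple product on `A(q)` is commutative in the outer arguments. -/
theorem Aq_triple_product_comm (a b c h k : ℚ) :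
    ∀ A ∈ Aq a b c h k, ∀ B ∈ Aq a b c h k, ∀ C ∈ Aq a b c h k,
      A * B.adjugate * C = C * B.adjugate * A := by
  rintro A ⟨x1, y1, rfl⟩ B ⟨x2, y2, rfl⟩ C ⟨x3, y3, rfl⟩
  simp only [Mq, Matrix.adjugate_fin_two_of]
  ext i j
  fin_cases i <;> fin_cases j <;>
    simp [Matrix.mul_apply, Fin.sum_univ_succ] <;> ring
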